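/- Let r < s < t, ε > 0, and let w be a continuous path. Then K_{r,s}(ε,w) + K_{s,t}(ε,w) ≤ K_{r,t}(ε,w) ≤ K_{r,s}(ε,w) + K_{s,t}(ε,w) + 1. -/

import Mathlib

open MeasureTheory ProbabilityTheory Filter Set ENNReal Asymptotics
open scoped NNReal Classical Topology

noncomputable section

/-- The grid `εℤ` of levels. -/
def lvGrid (ε : ℝ) : Set ℝ := {x | ∃ k : ℤ, x = ε * k}

/-- The successive times at which the path `w` crosses to a new point of the grid `εℤ`,
with values in `ℝ≥0∞` (`∞` meaning "never", corresponding to the convention `inf ∅ = +∞`). -/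
def hitT (ε : ℝ) (w : ℝ → ℝ) : ℕ → ℝ≥0∞
  | 0 => 0
  | n + 1 =>
      ⨅ (r : ℝ) (_ : hitT ε w n < ENNReal.ofReal r ∧ w r ∈ lvGrid ε ∧
          w r ≠ w ((hitT ε w n).toReal)), ENNReal.ofReal r

/-- `K_{s,t}(ε,w)`: the number of `ε`-level crossings of `w` in the interval `[s,t]`,
namely `#{n ≥ 2 : T_n(ε, w_{s+·}) ≤ t-s} + 1_{w_s ∈ εℤ}·1_{T_1(ε, w_{s+·}) ≤ t-s}`,
as an extended natural number. -/
def crossK (ε : ℝ) (w : ℝ → ℝ) (s t : ℝ) : ℕ∞ :=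
  {n : ℕ | 2 ≤ n ∧ hitT ε (fun r => w (s + r)) n ≤ ENNReal.ofReal (t - s)}.encard
    + (if w s ∈ lvGrid ε ∧ hitT ε (fun r => w (s + r)) 1 ≤ ENNReal.ofReal (t - s)
        then 1 else 0)

/-- `K_{s,t}(ε,w)` as an extended nonnegative real. -/
def crossKe (ε : ℝ) (w : ℝ → ℝ) (s t : ℝ) : ℝ≥0∞ := (crossK ε w s t : ℝ≥0∞)

/-- `K_{s,t}(ε,w)` as a real number (junk value `0` if the count is infinite). -/
def crossKR (ε : ℝ) (w : ℝ → ℝ) (s t : ℝ) : ℝ := (crossKe ε w s t).toReal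

/-- The averaged crossing count `K̄_{s,t}(ε,w) = ε⁻¹ ∫_{-ε/2}^{ε/2} K_{s,t}(ε, w+ρ) dρ`. -/
def avgK (ε : ℝ) (w : ℝ → ℝ) (s t : ℝ) : ℝ≥0∞ :=
  ENNReal.ofReal ε⁻¹ * ∫⁻ ρ in Set.Ioo (-(ε / 2)) (ε / 2), crossKe ε (fun r => w r + ρ) s t

lemma lvGrid_sep {ε : ℝ} (hε : 0 < ε) {x y : ℝ} (hx : x ∈ lvGrid ε) (hy : y ∈ lvGrid ε)
    (hxy : x ≠ y) : ε ≤ |x - y| := by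
  obtain ⟨k, rfl⟩ := hx
  obtain ⟨j, rfl⟩ := hy
  have hkj : k ≠ j := by rintro rfl; exact hxy rfl
  have : (1 : ℝ) ≤ |(k : ℝ) - j| := by
    have : (1 : ℝ) ≤ |((k - j : ℤ) : ℝ)| := by
      rw [← Int.cast_abs]
      exact_mod_cast Int.one_le_abs (sub_ne_zero.mpr hkj)
    simpa using this
  calc ε = ε * 1 := by ring
    _ ≤ ε * |(k : ℝ) - j| := by nlinarith [abs_nonneg ((k:ℝ) - j)]
    _ = |ε * ((k : ℝ) - j)| := by rw [abs_mul, abs_of_pos hε]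
    _ = |ε * k - ε * j| := by ring_nf

lemma lvGrid_lim {ε : ℝ} (hε : 0 < ε) {v : ℝ} {x : ℕ → ℝ}
    (hx : ∀ k, x k ∈ lvGrid ε ∧ x k ≠ v) {l : ℝ} (hl : Tendsto x atTop (nhds l)) :
    l ∈ lvGrid ε ∧ l ≠ v := by
  have hc : CauchySeq x := hl.cauchySeq
  obtain ⟨N, hN⟩ := Metric.cauchySeq_iff.mp hc ε hε
  have hconst : ∀ k ≥ N, x k = x N := by
    intro k hk
    by_contra hne
    have := lvGrid_sep hε (hx k).1 (hx N).1 hne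
    have := hN k hk N le_rfl
    rw [Real.dist_eq] at this
    linarith
  have : l = x N := by
    refine tendsto_nhds_unique hl ?_
    refine Tendsto.congr' ?_ (tendsto_const_nhds (x := x N))
    filter_upwards [eventually_ge_atTop N] with k hk
    exact (hconst k hk).symm
  rw [this]; exact hx N

lemma hitT_zero (ε : ℝ) (w : ℝ → ℝ) : hitT ε w 0 = 0 := rfl

lemma hitT_succ (ε : ℝ) (w : ℝ → ℝ) (n : ℕ) :
    hitT ε w (n + 1) = ⨅ (r : ℝ) (_ : hitT ε w n < ENNReal.ofReal r ∧ w r ∈ lvGrid ε ∧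
        w r ≠ w ((hitT ε w n).toReal)), ENNReal.ofReal r := rfl

lemma hitT_le_succ (ε : ℝ) (w : ℝ → ℝ) (n : ℕ) : hitT ε w n ≤ hitT ε w (n + 1) := by
  rw [hitT_succ]
  exact le_iInf fun r => le_iInf fun h => h.1.le

lemma hitT_mono (ε : ℝ) (w : ℝ → ℝ) : Monotone (hitT ε w) :=
  monotone_nat_of_le_succ (hitT_le_succ ε w)

lemma hitT_succ_top (ε : ℝ) (w : ℝ → ℝ) (n : ℕ) (h : hitT ε w n = ⊤) :
    hitT ε w (n + 1) = ⊤ := by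
  rw [hitT_succ, h]
  refine le_antisymm le_top (le_iInf fun r => le_iInf fun hr => ?_)
  exact absurd hr.1 (not_lt.mpr le_top)

lemma hitT_attain {ε : ℝ} (hε : 0 < ε) {f : ℝ → ℝ} (hf : Continuous f) (n : ℕ)
    (h : hitT ε f (n + 1) ≠ ⊤) :
    hitT ε f n < hitT ε f (n + 1) ∧
      hitT ε f (n + 1) = ENNReal.ofReal ((hitT ε f (n + 1)).toReal) ∧
      f ((hitT ε f (n + 1)).toReal) ∈ lvGrid ε ∧
      f ((hitT ε f (n + 1)).toReal) ≠ f ((hitT ε f n).toReal) := by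
  set I := hitT ε f (n + 1) with hI
  set T := hitT ε f n with hT
  have hle : T ≤ I := hitT_le_succ ε f n
  have hTne : T ≠ ⊤ := fun hh => h (le_antisymm le_top (hh ▸ hle))
  have hIof : I = ENNReal.ofReal I.toReal := (ENNReal.ofReal_toReal h).symm
  set c := I.toReal with hc
  -- extract approximating sequence
  have hex : ∀ k : ℕ, ∃ r : ℝ, (T < ENNReal.ofReal r ∧ f r ∈ lvGrid ε ∧
      f r ≠ f (T.toReal)) ∧ ENNReal.ofReal r < I + ENNReal.ofReal (1 / (k + 1)) := by
    intro k
    have hlt : I < I + ENNReal.ofReal (1 / (k + 1)) := by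
      refine ENNReal.lt_add_right h ?_
      simp [ENNReal.ofReal_eq_zero]
      positivity
    rw [hI, hitT_succ] at hlt
    obtain ⟨r, hr⟩ := iInf_lt_iff.mp hlt
    obtain ⟨hp, hr⟩ := iInf_lt_iff.mp hr
    exact ⟨r, hp, hr⟩
  choose rs hrs1 hrs2 using hex
  have hub : ∀ k, I ≤ ENNReal.ofReal (rs k) := by
    intro k
    rw [hI, hitT_succ]
    exact iInf_le_of_le (rs k) (iInf_le_of_le (hrs1 k) le_rfl)
  have hrpos : ∀ k, 0 < rs k := by
    intro k
    have := (hrs1 k).1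
    have h0 : (0 : ℝ≥0∞) < ENNReal.ofReal (rs k) := lt_of_le_of_lt (zero_le : 0 ≤ T) this
    exact ENNReal.ofReal_pos.mp h0
  have hlb : ∀ k, c ≤ rs k := by
    intro k
    have := ENNReal.toReal_le_toReal h ENNReal.ofReal_ne_top |>.mpr (hub k)
    rwa [ENNReal.toReal_ofReal (hrpos k).le] at this
  have hub2 : ∀ k, rs k ≤ c + 1 / (k + 1) := by
    intro k
    have := hrs2 k
    rw [hIof, ← ENNReal.ofReal_add ENNReal.toReal_nonneg (by positivity)] at this
    exact (ENNReal.ofReal_lt_ofReal_iff_of_nonneg (hrpos k).le).mp this |>.le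
  have htend : Tendsto rs atTop (nhds c) := by
    have h1 : Tendsto (fun k : ℕ => c + 1 / ((k : ℝ) + 1)) atTop (nhds c) := by
      have := tendsto_one_div_add_atTop_nhds_zero_nat (𝕜 := ℝ)
      have := (tendsto_const_nhds (x := c) (f := atTop (α := ℕ))).add this
      simpa using this
    exact tendsto_of_tendsto_of_tendsto_of_le_of_le tendsto_const_nhds h1 hlb hub2
  have hfc : f c ∈ lvGrid ε ∧ f c ≠ f (T.toReal) := by
    refine lvGrid_lim hε (v := f T.toReal) (x := fun k => f (rs k))
      (fun k => ⟨(hrs1 k).2.1, (hrs1 k).2.2⟩) ?_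
    exact ((hf.tendsto c).comp htend)
  have hstrict : T < I := by
    rcases lt_or_eq_of_le hle with h' | h'
    · exact h'
    · exfalso
      have : T.toReal = c := by rw [h']
      exact hfc.2 (by rw [← this])
  exact ⟨hstrict, hIof, hfc.1, hfc.2⟩

lemma shift_le {d : ℝ} (hd : 0 ≤ d) {P Q : ℝ → Prop} (h : ∀ u, Q u → 0 ≤ u ∧ P (d + u)) :
    (⨅ (u : ℝ) (_ : P u), ENNReal.ofReal u) ≤ ENNReal.ofReal d + ⨅ (u : ℝ) (_ : Q u), ENNReal.ofReal u := by
  rw [ENNReal.add_iInf]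
  refine le_iInf fun u => ?_
  rw [ENNReal.add_iInf]
  refine le_iInf fun hu => ?_
  calc (⨅ (u : ℝ) (_ : P u), ENNReal.ofReal u) ≤ ENNReal.ofReal (d + u) :=
        iInf₂_le (d + u) (h u hu).2
    _ = ENNReal.ofReal d + ENNReal.ofReal u := ENNReal.ofReal_add hd (h u hu).1

lemma shift_ge {d : ℝ} (hd : 0 ≤ d) {P Q : ℝ → Prop} (h : ∀ u, P u → d < u ∧ Q (u - d)) :
    ENNReal.ofReal d + (⨅ (u : ℝ) (_ : Q u), ENNReal.ofReal u) ≤ ⨅ (u : ℝ) (_ : P u), ENNReal.ofReal u := by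
  refine le_iInf fun u => le_iInf fun hu => ?_
  obtain ⟨hdu, hq⟩ := h u hu
  calc ENNReal.ofReal d + (⨅ (u : ℝ) (_ : Q u), ENNReal.ofReal u)
      ≤ ENNReal.ofReal d + ENNReal.ofReal (u - d) := add_le_add le_rfl (iInf₂_le _ hq)
    _ = ENNReal.ofReal u := by
        rw [← ENNReal.ofReal_add hd (by linarith)]
        ring_nf

lemma hitT_shift_step {ε : ℝ} {w : ℝ → ℝ} {r s : ℝ} (hrs : r < s) {M J : ℕ}
    (h : hitT ε (fun u => w (r + u)) M
      = ENNReal.ofReal (s - r) + hitT ε (fun u => w (s + u)) J) :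
    hitT ε (fun u => w (r + u)) (M + 1)
      = ENNReal.ofReal (s - r) + hitT ε (fun u => w (s + u)) (J + 1) := by
  have hd : (0 : ℝ) ≤ s - r := by linarith
  set d := s - r with hdd
  by_cases hU : hitT ε (fun u => w (s + u)) J = ⊤
  · have hfM : hitT ε (fun u => w (r + u)) M = ⊤ := by rw [h, hU, add_top]
    rw [hitT_succ_top _ _ _ hfM, hitT_succ_top _ _ _ hU, add_top]
  · have hT : hitT ε (fun u => w (r + u)) M ≠ ⊤ := by
      rw [h]; exact ENNReal.add_ne_top.mpr ⟨ENNReal.ofReal_ne_top, hU⟩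
    set U := hitT ε (fun u => w (s + u)) J with hUdef
    have htr : (hitT ε (fun u => w (r + u)) M).toReal = d + U.toReal := by
      rw [h, ENNReal.toReal_add ENNReal.ofReal_ne_top hU, ENNReal.toReal_ofReal hd]
    have hv : w (r + (hitT ε (fun u => w (r + u)) M).toReal) = w (s + U.toReal) := by
      rw [htr]; congr 1; ring
    rw [hitT_succ, hitT_succ]
    refine le_antisymm (shift_le hd ?_) (shift_ge hd ?_)
    · intro u hu
      have hu0 : 0 < u := ENNReal.ofReal_pos.mp ((zero_le : 0 ≤ U).trans_lt hu.1)
      have heq : r + (d + u) = s + u := by rw [hdd]; ring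
      refine ⟨hu0.le, ?_, ?_, ?_⟩
      · rw [h, ENNReal.ofReal_add hd hu0.le]
        exact (ENNReal.add_lt_add_iff_left ENNReal.ofReal_ne_top).mpr hu.1
      · show w (r + (d + u)) ∈ lvGrid ε
        rw [heq]; exact hu.2.1
      · show w (r + (d + u)) ≠ _
        rw [heq, hv]; exact hu.2.2
    · intro u hu
      have hDu : ENNReal.ofReal d < ENNReal.ofReal u := by
        calc ENNReal.ofReal d ≤ ENNReal.ofReal d + U := le_self_add
          _ = _ := h.symm
          _ < ENNReal.ofReal u := hu.1
      have hdu : d < u := by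
        by_contra hc
        exact absurd (ENNReal.ofReal_le_ofReal (not_lt.mp hc)) (not_le.mpr hDu)
      have heq : s + (u - d) = r + u := by rw [hdd]; ring
      refine ⟨hdu, ?_, ?_, ?_⟩
      · have : ENNReal.ofReal d + U < ENNReal.ofReal d + ENNReal.ofReal (u - d) := by
          rw [← ENNReal.ofReal_add hd (by linarith)]
          calc ENNReal.ofReal d + U = _ := h.symm
            _ < ENNReal.ofReal u := hu.1
            _ = ENNReal.ofReal (d + (u - d)) := by ring_nf
        exact (ENNReal.add_lt_add_iff_left ENNReal.ofReal_ne_top).mp this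
      · show w (s + (u - d)) ∈ lvGrid ε
        rw [heq]; exact hu.2.1
      · show w (s + (u - d)) ≠ _
        rw [heq]
        have h22 := hu.2.2
        rwa [hv] at h22

lemma hitT_shift {ε : ℝ} {w : ℝ → ℝ} {r s : ℝ} (hrs : r < s) {M J : ℕ}
    (h : hitT ε (fun u => w (r + u)) M
      = ENNReal.ofReal (s - r) + hitT ε (fun u => w (s + u)) J) (k : ℕ) :
    hitT ε (fun u => w (r + u)) (M + k)
      = ENNReal.ofReal (s - r) + hitT ε (fun u => w (s + u)) (J + k) := by
  induction k with
  | zero => simpa using h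
  | succ k ih =>
      exact hitT_shift_step hrs ih

lemma hitT_junction {ε : ℝ} (hε : 0 < ε) {w : ℝ → ℝ} (hw : Continuous w) {r s : ℝ}
    (hrs : r < s) {m : ℕ}
    (hm1 : hitT ε (fun u => w (r + u)) m ≤ ENNReal.ofReal (s - r))
    (hm2 : ENNReal.ofReal (s - r) < hitT ε (fun u => w (r + u)) (m + 1)) :
    (hitT ε (fun u => w (r + u)) (m + 1) = ⊤ ∧ hitT ε (fun u => w (s + u)) 1 = ⊤) ∨
    ∃ J : ℕ, hitT ε (fun u => w (r + u)) (m + 1)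
        = ENNReal.ofReal (s - r) + hitT ε (fun u => w (s + u)) J ∧
      (max (if w r ∈ lvGrid ε then 1 else 2) (m + 1) - (m + 1) + J
          ≤ (if w s ∈ lvGrid ε then 1 else 2)) ∧
      ((if w s ∈ lvGrid ε then 1 else 2 : ℕ)
          ≤ max (if w r ∈ lvGrid ε then 1 else 2) (m + 1) - (m + 1) + J + 1) := by
  have hd : (0 : ℝ) < s - r := by linarith
  set d := s - r with hdd
  set f : ℝ → ℝ := fun u => w (r + u) with hf
  set g : ℝ → ℝ := fun u => w (s + u) with hg
  have hgc : Continuous g := by fun_prop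
  have hTm : hitT ε f m ≠ ⊤ := fun hh => by
    rw [hh] at hm1; exact ENNReal.ofReal_ne_top (le_antisymm le_top hm1)
  set v : ℝ := w (r + (hitT ε f m).toReal) with hv
  -- every candidate for step m+1 exceeds d
  have K1 : ∀ u : ℝ, (hitT ε f m < ENNReal.ofReal u ∧ w (r + u) ∈ lvGrid ε ∧
      w (r + u) ≠ v) → d < u := by
    intro u hu
    have hle : hitT ε f (m + 1) ≤ ENNReal.ofReal u := by
      rw [hitT_succ]
      exact iInf_le_of_le u (iInf_le_of_le hu le_rfl)
    have : ENNReal.ofReal d < ENNReal.ofReal u := lt_of_lt_of_le hm2 hle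
    by_contra hc
    exact absurd (ENNReal.ofReal_le_ofReal (not_lt.mp hc)) (not_le.mpr this)
  -- if w s lies on the grid then w s = v
  have J1 : w s ∈ lvGrid ε → w s = v := by
    intro hws
    by_contra hne
    rcases lt_or_eq_of_le hm1 with hlt | heq
    · have hcand : hitT ε f m < ENNReal.ofReal d ∧ w (r + d) ∈ lvGrid ε ∧
          w (r + d) ≠ v := by
        have hrd : r + d = s := by rw [hdd]; ring
        exact ⟨hlt, by rw [hrd]; exact hws, by rw [hrd]; exact hne⟩
      have := K1 d hcand
      linarith
    · have : (hitT ε f m).toReal = d := by rw [heq, ENNReal.toReal_ofReal hd.le]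
      apply hne
      rw [hv, this]
      congr 1
      rw [hdd]; ring
  -- the value of v when m = 0
  have hv0 : m = 0 → v = w r := by
    intro h0
    rw [hv, h0, hitT_zero]
    norm_num
  -- v is on the grid when m ≥ 1
  have hvgrid : 1 ≤ m → v ∈ lvGrid ε := by
    intro h1
    obtain ⟨k, rfl⟩ := Nat.exists_eq_add_of_le' h1
    exact (hitT_attain hε (by fun_prop : Continuous f) k hTm).2.2.1
  by_cases hvs : w s = v
  -- Case A : alignment with J = 1
  · refine Or.inr ⟨1, ?_, ?_, ?_⟩
    · rw [hitT_succ, hitT_succ, hitT_zero]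
      have hg0 : g ((0 : ℝ≥0∞).toReal) = w s := by
        rw [hg]; norm_num
      rw [hg0]
      refine le_antisymm (shift_le hd.le ?_) (shift_ge hd.le ?_)
      · intro u hu
        have hu0 : 0 < u := ENNReal.ofReal_pos.mp hu.1
        have heq : r + (d + u) = s + u := by rw [hdd]; ring
        refine ⟨hu0.le, ?_, ?_, ?_⟩
        · refine lt_of_le_of_lt hm1 ?_
          exact (ENNReal.ofReal_lt_ofReal_iff_of_nonneg hd.le).mpr (by linarith)
        · show w (r + (d + u)) ∈ lvGrid ε
          rw [heq]; exact hu.2.1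
        · show w (r + (d + u)) ≠ v
          rw [heq, ← hvs]; exact hu.2.2
      · intro u hu
        have hdu : d < u := K1 u hu
        have heq : s + (u - d) = r + u := by rw [hdd]; ring
        refine ⟨hdu, ?_, ?_, ?_⟩
        · exact ENNReal.ofReal_pos.mpr (by linarith)
        · show w (s + (u - d)) ∈ lvGrid ε
          rw [heq]; exact hu.2.1
        · show w (s + (u - d)) ≠ w s
          rw [heq, hvs]; exact hu.2.2
    · by_cases hws : w s ∈ lvGrid ε
      · simp only [hws, if_true]
        have har : (if w r ∈ lvGrid ε then 1 else 2 : ℕ) ≤ m + 1 := by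
          rcases Nat.eq_zero_or_pos m with h0 | h1
          · have : w r ∈ lvGrid ε := by
              rw [← hv0 h0, ← hvs]; exact hws
            simp [this, h0]
          · split <;> omega
        rw [max_eq_right har]
        omega
      · have hm0 : m = 0 := by
          by_contra h1
          exact hws (hvs ▸ hvgrid (Nat.one_le_iff_ne_zero.mpr h1))
        have hwr : w r ∉ lvGrid ε := by
          rw [← hv0 hm0, ← hvs]; exact hws
        simp [hws, hwr, hm0]
    · by_cases hws : w s ∈ lvGrid ε <;> by_cases hwr : w r ∈ lvGrid ε <;>
        simp [hws, hwr] <;> omega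
  -- Case B : w s is off the grid
  · have hws : w s ∉ lvGrid ε := fun h => hvs (J1 h)
    have hg0 : g ((0 : ℝ≥0∞).toReal) = w s := by
      rw [hg]; norm_num
    have hg0' : g ((hitT ε g 0).toReal) = w s := by rw [hitT_zero]; exact hg0
    by_cases hU1 : hitT ε g 1 = ⊤
    -- β1 : no more grid hits at all
    · refine Or.inl ⟨?_, hU1⟩
      by_contra hT1
      obtain ⟨h1, h2, h3, h4⟩ := hitT_attain hε (by fun_prop : Continuous f) m hT1
      set c := (hitT ε f (m + 1)).toReal with hc
      have hcand : hitT ε f m < ENNReal.ofReal c ∧ w (r + c) ∈ lvGrid ε ∧ w (r + c) ≠ v := by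
        refine ⟨h2 ▸ h1, h3, h4⟩
      have hdc : d < c := K1 c hcand
      have hgcd : g (c - d) ∈ lvGrid ε := by
        have heq2 : s + (c - d) = r + c := by rw [hdd]; ring
        show w (s + (c - d)) ∈ lvGrid ε
        rw [heq2]; exact h3
      have : hitT ε g 1 ≤ ENNReal.ofReal (c - d) := by
        rw [hitT_succ, hitT_zero]
        refine iInf_le_of_le (c - d) (iInf_le_of_le ?_ le_rfl)
        refine ⟨ENNReal.ofReal_pos.mpr (by linarith), hgcd, ?_⟩
        intro hh
        apply hws
        rw [← hg0, ← hh]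
        exact hgcd
      rw [hU1] at this
      exact ENNReal.ofReal_ne_top (le_antisymm le_top this)
    -- U1 finite : attained first grid hit after s
    · obtain ⟨hU1pos, hU1eq, hU1grid, hU1ne⟩ :=
        hitT_attain hε hgc 0 (by rw [zero_add]; exact hU1)
      rw [zero_add] at hU1pos hU1eq hU1grid hU1ne
      set c1 := (hitT ε g 1).toReal with hc1
      have hc1pos : 0 < c1 := by
        rw [hc1]
        refine ENNReal.toReal_pos ?_ hU1
        intro hh
        rw [hitT_zero] at hU1pos
        rw [hh] at hU1pos
        exact lt_irrefl _ hU1pos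
      rw [hg0'] at hU1ne
      by_cases hvU : g c1 = v
      -- β2 : first hit returns to the previous level v ; J = 2
      · refine Or.inr ⟨2, ?_, ?_, ?_⟩
        · rw [hitT_succ, hitT_succ ε g 1]
          have hgc1 : g ((hitT ε g 1).toReal) = v := hvU
          rw [hgc1]
          refine le_antisymm (shift_le hd.le ?_) (shift_ge hd.le ?_)
          · intro u hu
            have hu0 : 0 < u := by
              have := lt_of_le_of_lt zero_le hu.1
              exact ENNReal.ofReal_pos.mp this
            have heq : r + (d + u) = s + u := by rw [hdd]; ring
            refine ⟨hu0.le, ?_, ?_, ?_⟩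
            · refine lt_of_le_of_lt hm1 ?_
              exact (ENNReal.ofReal_lt_ofReal_iff_of_nonneg hd.le).mpr (by linarith)
            · show w (r + (d + u)) ∈ lvGrid ε
              rw [heq]; exact hu.2.1
            · show w (r + (d + u)) ≠ v
              rw [heq]; exact hu.2.2
          · intro u hu
            have hdu : d < u := K1 u hu
            have heq : s + (u - d) = r + u := by rw [hdd]; ring
            have hgrid' : g (u - d) ∈ lvGrid ε := by
              rw [hg]; show w (s + (u - d)) ∈ lvGrid ε
              rw [heq]; exact hu.2.1
            have hne' : g (u - d) ≠ w s := by
              intro hh; exact hws (hh ▸ hgrid')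
            have hle1 : hitT ε g 1 ≤ ENNReal.ofReal (u - d) := by
              rw [hitT_succ, hitT_zero, hg0]
              refine iInf_le_of_le (u - d) (iInf_le_of_le ?_ le_rfl)
              refine ⟨ENNReal.ofReal_pos.mpr (by linarith), hgrid', hne'⟩
            have hlt1 : hitT ε g 1 < ENNReal.ofReal (u - d) := by
              rcases lt_or_eq_of_le hle1 with h' | h'
              · exact h'
              · exfalso
                have hc1u : c1 = u - d := by
                  rw [hc1, h', ENNReal.toReal_ofReal (by linarith)]
                apply hu.2.2
                show w (r + u) = v
                have hgu : g (u - d) = w (r + u) := by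
                  show w (s + (u - d)) = w (r + u)
                  rw [heq]
                rw [← hgu, ← hc1u]
                exact hvU
            refine ⟨hdu, hlt1, hgrid', ?_⟩
            show g (u - d) ≠ v
            rw [hg]; show w (s + (u - d)) ≠ v
            rw [heq]; exact hu.2.2
        · -- bounds for J = 2
          have har : (if w r ∈ lvGrid ε then 1 else 2 : ℕ) ≤ m + 1 := by
            rcases Nat.eq_zero_or_pos m with h0 | h1
            · have : w r ∈ lvGrid ε := by
                rw [← hv0 h0, ← hvU]; exact hU1grid
              simp [this, h0]
            · split <;> omega
          rw [max_eq_right har]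
          simp [hws]
        · by_cases hwr : w r ∈ lvGrid ε <;> simp [hws, hwr] <;> omega
      -- β3 : first hit is a new level ; J = 1
      · refine Or.inr ⟨1, ?_, ?_, ?_⟩
        · rw [hitT_succ]
          refine le_antisymm ?_ (shift_ge hd.le ?_)
          · have hPdc1 : hitT ε f m < ENNReal.ofReal (d + c1) ∧
                w (r + (d + c1)) ∈ lvGrid ε ∧ w (r + (d + c1)) ≠ v := by
              have heq : r + (d + c1) = s + c1 := by rw [hdd]; ring
              refine ⟨?_, ?_, ?_⟩
              · refine lt_of_le_of_lt hm1 ?_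
                exact (ENNReal.ofReal_lt_ofReal_iff_of_nonneg hd.le).mpr (by linarith)
              · rw [heq]; exact hU1grid
              · rw [heq]; exact hvU
            calc (⨅ (u : ℝ) (_ : hitT ε f m < ENNReal.ofReal u ∧ w (r + u) ∈ lvGrid ε ∧
                  w (r + u) ≠ v), ENNReal.ofReal u) ≤ ENNReal.ofReal (d + c1) :=
                iInf_le_of_le (d + c1) (iInf_le_of_le hPdc1 le_rfl)
              _ = ENNReal.ofReal d + ENNReal.ofReal c1 := ENNReal.ofReal_add hd.le hc1pos.le
              _ = ENNReal.ofReal d + hitT ε g 1 := by rw [← hU1eq]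
          · intro u hu
            have hdu : d < u := K1 u hu
            have heq : s + (u - d) = r + u := by rw [hdd]; ring
            have hgrid' : g (u - d) ∈ lvGrid ε := by
              rw [hg]; show w (s + (u - d)) ∈ lvGrid ε
              rw [heq]; exact hu.2.1
            refine ⟨hdu, ?_⟩
            rw [hitT_zero]
            refine ⟨ENNReal.ofReal_pos.mpr (by linarith), hgrid', ?_⟩
            rw [hg0]
            intro hh; exact hws (hh ▸ hgrid')
        · by_cases hwr : w r ∈ lvGrid ε <;> simp [hws, hwr] <;> omega
        · by_cases hwr : w r ∈ lvGrid ε <;> simp [hws, hwr] <;> omega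

lemma crossK_eq_encard (ε : ℝ) (w : ℝ → ℝ) (a b : ℝ) :
    crossK ε w a b = {n : ℕ | (if w a ∈ lvGrid ε then 1 else 2) ≤ n ∧
      hitT ε (fun u => w (a + u)) n ≤ ENNReal.ofReal (b - a)}.encard := by
  by_cases hwa : w a ∈ lvGrid ε
  · rw [crossK]
    simp only [hwa, true_and, if_true]
    by_cases hT1 : hitT ε (fun u => w (a + u)) 1 ≤ ENNReal.ofReal (b - a)
    · rw [if_pos hT1]
      have hins : {n : ℕ | 1 ≤ n ∧ hitT ε (fun u => w (a + u)) n ≤ ENNReal.ofReal (b - a)}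
          = insert 1 {n : ℕ | 2 ≤ n ∧ hitT ε (fun u => w (a + u)) n ≤ ENNReal.ofReal (b - a)} := by
        ext n
        simp only [mem_setOf_eq, mem_insert_iff]
        constructor
        · rintro ⟨h1, h2⟩
          rcases Nat.lt_or_ge n 2 with h | h
          · left; omega
          · right; exact ⟨h, h2⟩
        · rintro (rfl | ⟨h1, h2⟩)
          · exact ⟨le_refl 1, hT1⟩
          · exact ⟨by omega, h2⟩
      rw [hins, Set.encard_insert_of_notMem (by simp)]
    · rw [if_neg hT1]
      have : {n : ℕ | 1 ≤ n ∧ hitT ε (fun u => w (a + u)) n ≤ ENNReal.ofReal (b - a)}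
          = {n : ℕ | 2 ≤ n ∧ hitT ε (fun u => w (a + u)) n ≤ ENNReal.ofReal (b - a)} := by
        ext n
        simp only [mem_setOf_eq]
        constructor
        · rintro ⟨h1, h2⟩
          refine ⟨?_, h2⟩
          rcases Nat.lt_or_ge n 2 with h | h
          · exfalso
            have : n = 1 := by omega
            rw [this] at h2
            exact hT1 h2
          · exact h
        · rintro ⟨h1, h2⟩; exact ⟨by omega, h2⟩
      rw [this, add_zero]
  · rw [crossK, if_neg (fun h => hwa h.1), if_neg hwa, add_zero]


/-- **Superadditivity of `K`.** For `r < s < t` and a continuous path `w`,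
`K_{r,s}(ε,w) + K_{s,t}(ε,w) ≤ K_{r,t}(ε,w) ≤ K_{r,s}(ε,w) + K_{s,t}(ε,w) + 1`. -/
theorem crossK_superadditive (ε : ℝ) (hε : 0 < ε) (w : ℝ → ℝ) (hw : Continuous w)
    (r s t : ℝ) (hrs : r < s) (hst : s < t) :
    crossK ε w r s + crossK ε w s t ≤ crossK ε w r t ∧
      crossK ε w r t ≤ crossK ε w r s + crossK ε w s t + 1 := by
  set f : ℝ → ℝ := fun u => w (r + u) with hf
  set g : ℝ → ℝ := fun u => w (s + u) with hg
  set D : ℝ≥0∞ := ENNReal.ofReal (s - r) with hD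
  set ar : ℕ := if w r ∈ lvGrid ε then 1 else 2 with har
  set as : ℕ := if w s ∈ lvGrid ε then 1 else 2 with has
  have hKrs : crossK ε w r s = {n : ℕ | ar ≤ n ∧ hitT ε f n ≤ D}.encard :=
    crossK_eq_encard ε w r s
  have hKst : crossK ε w s t
      = {n : ℕ | as ≤ n ∧ hitT ε g n ≤ ENNReal.ofReal (t - s)}.encard :=
    crossK_eq_encard ε w s t
  have hKrt : crossK ε w r t
      = {n : ℕ | ar ≤ n ∧ hitT ε f n ≤ ENNReal.ofReal (t - r)}.encard :=
    crossK_eq_encard ε w r t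
  have hDrt : D ≤ ENNReal.ofReal (t - r) := ENNReal.ofReal_le_ofReal (by linarith)
  have hofr : ENNReal.ofReal (t - r) = D + ENNReal.ofReal (t - s) := by
    rw [hD, ← ENNReal.ofReal_add (by linarith) (by linarith)]
    congr 1
    ring
  by_cases hfin : ∃ n, D < hitT ε f n
  · -- finitely many crossings before s
    have h0 : ¬ D < hitT ε f 0 := by
      rw [hitT_zero]
      exact not_lt.mpr (zero_le : 0 ≤ D)
    set m' := Nat.find hfin with hm'
    have hm'pos : 1 ≤ m' := by
      rcases Nat.eq_zero_or_pos m' with h | h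
      · exfalso
        have := Nat.find_spec hfin
        rw [← hm', h] at this
        exact h0 this
      · exact h
    set m := m' - 1 with hmdef
    have hmm : m + 1 = m' := by omega
    have hm2 : D < hitT ε f (m + 1) := by rw [hmm]; exact Nat.find_spec hfin
    have hm1 : hitT ε f m ≤ D := not_lt.mp (Nat.find_min hfin (by omega))
    have hchar : ∀ n : ℕ, hitT ε f n ≤ D ↔ n ≤ m := by
      intro n
      constructor
      · intro h
        by_contra hc
        exact absurd (le_trans (hitT_mono ε f (by omega : m + 1 ≤ n)) h) (not_le.mpr hm2)
      · intro h
        exact le_trans (hitT_mono ε f h) hm1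
    set A := max ar (m + 1) with hA
    have hArm : m + 1 ≤ A := le_max_right _ _
    have hAar : ar ≤ A := le_max_left _ _
    have hsplit : {n : ℕ | ar ≤ n ∧ hitT ε f n ≤ ENNReal.ofReal (t - r)}
        = {n : ℕ | ar ≤ n ∧ hitT ε f n ≤ D}
          ∪ {n : ℕ | A ≤ n ∧ hitT ε f n ≤ ENNReal.ofReal (t - r)} := by
      ext n
      simp only [mem_setOf_eq, mem_union]
      constructor
      · rintro ⟨h1, h2⟩
        rcases Nat.lt_or_ge n (m + 1) with h | h
        · exact Or.inl ⟨h1, (hchar n).mpr (by omega)⟩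
        · exact Or.inr ⟨max_le h1 h, h2⟩
      · rintro (⟨h1, h2⟩ | ⟨h1, h2⟩)
        · exact ⟨h1, le_trans h2 hDrt⟩
        · exact ⟨le_trans hAar h1, h2⟩
    have hdisj : Disjoint {n : ℕ | ar ≤ n ∧ hitT ε f n ≤ D}
        {n : ℕ | A ≤ n ∧ hitT ε f n ≤ ENNReal.ofReal (t - r)} := by
      rw [Set.disjoint_left]
      rintro n ⟨h1, h2⟩ ⟨h3, h4⟩
      have := (hchar n).mp h2
      omega
    have hcard : crossK ε w r t = crossK ε w r s
        + {n : ℕ | A ≤ n ∧ hitT ε f n ≤ ENNReal.ofReal (t - r)}.encard := by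
      rw [hKrt, hKrs, hsplit, Set.encard_union_eq hdisj]
    rcases hitT_junction hε hw hrs hm1 hm2 with ⟨hTtop, hU1top⟩ | ⟨J, hJ, hb1, hb2⟩
    · -- no more crossings at all
      have hBempty : {n : ℕ | A ≤ n ∧ hitT ε f n ≤ ENNReal.ofReal (t - r)} = ∅ := by
        ext n
        simp only [mem_setOf_eq, mem_empty_iff_false, iff_false, not_and]
        intro h1 h2
        have : hitT ε f n = ⊤ :=
          le_antisymm le_top (hTtop ▸ hitT_mono ε f (le_trans hArm h1))
        rw [this] at h2
        exact ENNReal.ofReal_ne_top (le_antisymm le_top h2)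
      have hSst : {n : ℕ | as ≤ n ∧ hitT ε g n ≤ ENNReal.ofReal (t - s)} = ∅ := by
        ext n
        simp only [mem_setOf_eq, mem_empty_iff_false, iff_false, not_and]
        intro h1 h2
        have hn1 : 1 ≤ n := by rw [has] at h1; split at h1 <;> omega
        have : hitT ε g n = ⊤ := le_antisymm le_top (hU1top ▸ hitT_mono ε g hn1)
        rw [this] at h2
        exact ENNReal.ofReal_ne_top (le_antisymm le_top h2)
      rw [hcard, hBempty, hKst, hSst]
      simp
    · -- alignment case
      have halign : ∀ k : ℕ, hitT ε f (m + 1 + k) = D + hitT ε g (J + k) :=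
        fun k => hitT_shift hrs hJ k
      set j0 := A - (m + 1) + J with hj0
      have hJj0 : J ≤ j0 := by omega
      have himg : (fun n => n - (m + 1) + J) ''
            {n : ℕ | A ≤ n ∧ hitT ε f n ≤ ENNReal.ofReal (t - r)}
          = {j : ℕ | j0 ≤ j ∧ hitT ε g j ≤ ENNReal.ofReal (t - s)} := by
        ext j
        simp only [mem_image, mem_setOf_eq]
        constructor
        · rintro ⟨n, ⟨h1, h2⟩, rfl⟩
          have hnm : m + 1 ≤ n := le_trans hArm h1
          constructor
          · omega
          · have := halign (n - (m + 1))
            rw [show m + 1 + (n - (m + 1)) = n by omega,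
              show J + (n - (m + 1)) = n - (m + 1) + J by omega] at this
            rw [this, hofr] at h2
            exact (ENNReal.add_le_add_iff_left ENNReal.ofReal_ne_top).mp h2
        · rintro ⟨h1, h2⟩
          refine ⟨m + 1 + (j - J), ⟨by omega, ?_⟩, by omega⟩
          have := halign (j - J)
          rw [show J + (j - J) = j by omega] at this
          rw [this, hofr]
          exact add_le_add le_rfl h2
      have hinj : Set.InjOn (fun n => n - (m + 1) + J)
          {n : ℕ | A ≤ n ∧ hitT ε f n ≤ ENNReal.ofReal (t - r)} := by
        rintro n1 ⟨h1, _⟩ n2 ⟨h2, _⟩ h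
        simp only at h
        have e1 : m + 1 ≤ n1 := le_trans hArm h1
        have e2 : m + 1 ≤ n2 := le_trans hArm h2
        omega
      have hBcard : {n : ℕ | A ≤ n ∧ hitT ε f n ≤ ENNReal.ofReal (t - r)}.encard
          = {j : ℕ | j0 ≤ j ∧ hitT ε g j ≤ ENNReal.ofReal (t - s)}.encard := by
        rw [← himg, Set.InjOn.encard_image hinj]
      have hsub : {n : ℕ | as ≤ n ∧ hitT ε g n ≤ ENNReal.ofReal (t - s)}
          ⊆ {j : ℕ | j0 ≤ j ∧ hitT ε g j ≤ ENNReal.ofReal (t - s)} :=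
        fun j hj => ⟨le_trans hb1 hj.1, hj.2⟩
      have hsup : {j : ℕ | j0 ≤ j ∧ hitT ε g j ≤ ENNReal.ofReal (t - s)}
          ⊆ insert j0 {n : ℕ | as ≤ n ∧ hitT ε g n ≤ ENNReal.ofReal (t - s)} := by
        rintro j ⟨h1, h2⟩
        by_cases h : as ≤ j
        · exact Or.inr ⟨h, h2⟩
        · left; omega
      constructor
      · rw [hcard, hBcard, hKst]
        exact add_le_add le_rfl (Set.encard_mono hsub)
      · rw [hcard, hBcard, hKst, add_assoc]
        refine add_le_add le_rfl ?_
        exact le_trans (Set.encard_mono hsup) (Set.encard_insert_le _ _)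
  · -- infinitely many crossings in [r, s]
    push_neg at hfin
    have hKrsT : crossK ε w r s = ⊤ := by
      rw [hKrs]
      refine Set.Infinite.encard_eq ?_
      refine Set.Infinite.mono (fun n (hn : ar ≤ n) => ⟨hn, hfin n⟩) ?_
      exact Set.Ici_infinite ar
    have hKrtT : crossK ε w r t = ⊤ := by
      rw [hKrt]
      refine Set.Infinite.encard_eq ?_
      refine Set.Infinite.mono (fun n (hn : ar ≤ n) => ⟨hn, le_trans (hfin n) hDrt⟩) ?_
      exact Set.Ici_infinite ar
    constructor
    · rw [hKrtT]; exact le_top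
    · rw [hKrsT, top_add, top_add]; exact le_top
end
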